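/- Let ℓ ∈ ℕ with ℓ ≥ 3, and let γ be a Cℓ planar curve parametrized by arc length, written in polar coordinates about M ∈ ℝ² as γ(s) = M + r(s)(cos θ(s), sin θ(s))ᵀ with r > 0 and θ'(0) > 0, with curvature κ. Suppose r(0) = R, r'(0) = 0, κ(0) = 1/R, κ⁽ᵏ⁾(0) = 0 for k = 1,…,ℓ−3, and κ^(ℓ−2)(0) ≠ 0. Then R − r(s) = (κ^(ℓ−2)(0)/ℓ!)·s^ℓ + o(s^ℓ) as s → 0; in particular there exist constants C > 0 and L₀ > 0 such that for all 0 < L ≤ L₀, sup_{|s| ≤ L} |R − ‖γ(s) − M‖| ≤ C·L^ℓ. -/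

import Mathlib

open Set Real

/-- The Euclidean norm on `ℝ × ℝ`. -/
noncomputable def pnorm (v : ℝ × ℝ) : ℝ := Real.sqrt (v.1 ^ 2 + v.2 ^ 2)

/-- The open ray emanating from `M` in direction `(cos θ, sin θ)`. -/
def rayFrom (M : ℝ × ℝ) (θ : ℝ) : Set (ℝ × ℝ) :=
  {p | ∃ r : ℝ, 0 < r ∧ p = M + r • (Real.cos θ, Real.sin θ)}

/-- The `(M,R,d,θ₁,θ₂)`-ring segment. -/
def ringSeg (M : ℝ × ℝ) (R d θ₁ θ₂ : ℝ) : Set (ℝ × ℝ) :=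
  {p | ∃ r θ : ℝ, R - d ≤ r ∧ r ≤ R + d ∧ θ₁ ≤ θ ∧ θ ≤ θ₂ ∧
    p = M + r • (Real.cos θ, Real.sin θ)}

/-- The ring segment `R(M,R,d,θ₁,θ₂)` simply covers the set `G` (the graph of a curve):
every ray with angle `θ ∈ [θ₁,θ₂]` meets `G` in exactly one point, that point lies in the
ring segment, and every point of `G` lies on such a ray. -/
def SimplyCovers (M : ℝ × ℝ) (R d θ₁ θ₂ : ℝ) (G : Set (ℝ × ℝ)) : Prop :=
  (∀ θ ∈ Set.Icc θ₁ θ₂, ∃! p : ℝ × ℝ, p ∈ rayFrom M θ ∩ G) ∧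
  (∀ θ ∈ Set.Icc θ₁ θ₂, ∀ p ∈ rayFrom M θ ∩ G, p ∈ ringSeg M R d θ₁ θ₂) ∧
  (∀ p ∈ G, ∃ θ ∈ Set.Icc θ₁ θ₂, p ∈ rayFrom M θ)

/-- `G` is the graph of a convex curve: it is contained in the boundary of a nonempty
compact convex subset of `ℝ²`. -/
def IsConvexCurveGraph (G : Set (ℝ × ℝ)) : Prop :=
  ∃ K : Set (ℝ × ℝ), K.Nonempty ∧ IsCompact K ∧ Convex ℝ K ∧ G ⊆ frontier K

open Asymptotics Filter

/-- Under the osculation hypotheses of Statement 10 together with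
`κ⁽ℓ⁻²⁾(0) ≠ 0`, one has `R − r(s) = (κ⁽ℓ⁻²⁾(0)/ℓ!)·sℓ + o(sℓ)` as `s → 0`; in
particular there are constants `C > 0` and `L₀ > 0` such that for all `0 < L ≤ L₀`,
`sup_{|s| ≤ L} |R − ‖γ(s) − M‖| ≤ C·Lℓ`. -/

lemma myIDW_eq {n : ℕ} {f : ℝ → ℝ} {U : Set ℝ} (hU : IsOpen U) {x : ℝ} (hx : x ∈ U) :
    iteratedDerivWithin n f U x = iteratedDeriv n f x := by
  unfold iteratedDerivWithin iteratedDeriv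
  rw [iteratedFDerivWithin_of_isOpen n hU hx]

lemma iteratedDeriv_add_of_open {n : ℕ} {f g : ℝ → ℝ} {U : Set ℝ} (hU : IsOpen U) {x : ℝ}
    (hx : x ∈ U) (hf : ContDiffOn ℝ n f U) (hg : ContDiffOn ℝ n g U) :
    iteratedDeriv n (fun s => f s + g s) x = iteratedDeriv n f x + iteratedDeriv n g x := by
  rw [← myIDW_eq hU hx, ← myIDW_eq (n := n) (f := f) hU hx, ← myIDW_eq (n := n) (f := g) hU hx]
  exact iteratedDerivWithin_add hx hU.uniqueDiffOn (hf x hx) (hg x hx)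

lemma iteratedDeriv_pow' (n : ℕ) : ∀ k : ℕ, iteratedDeriv k (fun x : ℝ => x ^ n) =
    fun x : ℝ => (n.descFactorial k : ℝ) * x ^ (n - k) := by
  intro k
  induction k with
  | zero => simp [iteratedDeriv_zero]
  | succ k ih =>
    rw [iteratedDeriv_succ, ih]
    funext x
    rw [deriv_const_mul _ ((differentiable_pow _).differentiableAt), deriv_pow_field,
      Nat.descFactorial_succ, show n - (k + 1) = n - k - 1 from by omega]
    push_cast
    ring

lemma littleo_integrate {f : ℝ → ℝ} {n : ℕ}
    (hd : ∀ᶠ s in nhds (0:ℝ), DifferentiableAt ℝ f s)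
    (hf0 : f 0 = 0)
    (h : deriv f =o[nhds 0] fun s : ℝ => s ^ n) :
    f =o[nhds 0] fun s : ℝ => s ^ (n + 1) := by
  rw [Asymptotics.isLittleO_iff]
  intro c hc
  obtain ⟨δ, hδ, hball⟩ := Metric.eventually_nhds_iff.1 ((Asymptotics.isLittleO_iff.1 h hc).and hd)
  rw [Metric.eventually_nhds_iff]
  refine ⟨δ, hδ, fun s hs => ?_⟩
  rw [Real.dist_eq, sub_zero] at hs
  have habs : ∀ t ∈ Set.uIcc (0:ℝ) s, |t| ≤ |s| := by
    intro t ht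
    rcases Set.mem_uIcc.1 ht with ⟨h1, h2⟩ | ⟨h1, h2⟩
    · rw [abs_of_nonneg h1]; exact h2.trans (le_abs_self s)
    · rw [abs_of_nonpos h2]
      calc -t ≤ -s := by linarith
        _ ≤ |s| := neg_le_abs s
  have hin : ∀ t ∈ Set.uIcc (0:ℝ) s, dist t 0 < δ := by
    intro t ht
    rw [Real.dist_eq, sub_zero]
    exact lt_of_le_of_lt (habs t ht) hs
  have key := (convex_uIcc (0:ℝ) s).norm_image_sub_le_of_norm_deriv_le (f := f) (C := c * |s| ^ n)
    (fun x hx => (hball (hin x hx)).2)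
    (fun x hx => by
      calc ‖deriv f x‖ ≤ c * ‖x ^ n‖ := (hball (hin x hx)).1
        _ = c * |x| ^ n := by rw [Real.norm_eq_abs, abs_pow]
        _ ≤ c * |s| ^ n := mul_le_mul_of_nonneg_left (pow_le_pow_left₀ (abs_nonneg x) (habs x hx) n) hc.le)
    (Set.left_mem_uIcc) (Set.right_mem_uIcc)
  rw [hf0, sub_zero, sub_zero, Real.norm_eq_abs, Real.norm_eq_abs] at key
  calc ‖f s‖ ≤ c * |s| ^ n * |s| := key
    _ = c * |s| ^ (n + 1) := by ring
    _ = c * ‖s ^ (n + 1)‖ := by rw [Real.norm_eq_abs, abs_pow]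

lemma littleo_of_deriv_vanish : ∀ (n : ℕ) (f : ℝ → ℝ) (U : Set ℝ), IsOpen U → (0:ℝ) ∈ U →
    ContDiffOn ℝ n f U → (∀ k, k ≤ n → iteratedDeriv k f 0 = 0) →
    f =o[nhds 0] fun s : ℝ => s ^ n := by
  intro n
  induction n with
  | zero =>
    intro f U hU h0 hf hv
    simp only [pow_zero]
    rw [Asymptotics.isLittleO_one_iff]
    have ht := (hf.continuousOn.continuousAt (hU.mem_nhds h0)).tendsto
    have h00 : f 0 = 0 := by simpa [iteratedDeriv_zero] using hv 0 le_rfl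
    rwa [h00] at ht
  | succ n ih =>
    intro f U hU h0 hf hv
    have hdf : ContDiffOn ℝ n (deriv f) U :=
      hf.deriv_of_isOpen hU (by exact_mod_cast le_rfl)
    have h2 := ih (deriv f) U hU h0 hdf (fun k hk => by
      have := hv (k + 1) (by omega)
      rwa [iteratedDeriv_succ'] at this)
    refine littleo_integrate ?_ ?_ h2
    · filter_upwards [hU.mem_nhds h0] with s hs
      exact (hf.differentiableOn (by simp)).differentiableAt
        (hU.mem_nhds hs)
    · simpa [iteratedDeriv_zero] using hv 0 (by omega)

lemma pow_isBigO_pow {m n : ℕ} (h : n ≤ m) :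
    (fun s : ℝ => s ^ m) =O[nhds 0] fun s : ℝ => s ^ n := by
  have h1 : (fun s : ℝ => s ^ (m - n)) =O[nhds (0:ℝ)] (fun _ => (1:ℝ)) :=
    ((continuous_pow (m - n)).tendsto 0).isBigO_one ℝ
  have := h1.mul (isBigO_refl (fun s : ℝ => s ^ n) (nhds 0))
  refine this.congr (fun x => ?_) (fun x => one_mul _)
  rw [← pow_add, Nat.sub_add_cancel h]

lemma pow_isLittleO_pow {m n : ℕ} (h : n < m) :
    (fun s : ℝ => s ^ m) =o[nhds 0] fun s : ℝ => s ^ n := by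
  have h1 : (fun s : ℝ => s ^ (m - n)) =o[nhds (0:ℝ)] (fun _ => (1:ℝ)) := by
    rw [Asymptotics.isLittleO_one_iff]
    have := (continuous_pow (m - n)).tendsto (0:ℝ)
    rwa [zero_pow (by omega : m - n ≠ 0)] at this
  have := h1.mul_isBigO (isBigO_refl (fun s : ℝ => s ^ n) (nhds 0))
  refine this.congr (fun x => ?_) (fun x => one_mul _)
  rw [← pow_add, Nat.sub_add_cancel h.le]

lemma iteratedDeriv_cmul_pow (c : ℝ) (n : ℕ) : ∀ k : ℕ, iteratedDeriv k (fun x : ℝ => c * x ^ n)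
    = fun x : ℝ => c * ((n.descFactorial k : ℝ) * x ^ (n - k)) := by
  intro k
  induction k with
  | zero => simp [iteratedDeriv_zero]
  | succ k ih =>
    rw [iteratedDeriv_succ, ih]
    funext x
    rw [deriv_const_mul _ (((differentiable_pow _).differentiableAt).const_mul _),
      deriv_const_mul _ ((differentiable_pow _).differentiableAt), deriv_pow_field,
      Nat.descFactorial_succ, show n - (k + 1) = n - k - 1 from by omega]
    push_cast
    ring

theorem radial_deviation_asymptotics
    (ℓ : ℕ) (hℓ : 3 ≤ ℓ) (a b R : ℝ) (M : ℝ × ℝ)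
    (γ : ℝ → ℝ × ℝ) (r θ κ : ℝ → ℝ)
    (ha : a < 0) (hb : 0 < b) (hR : 0 < R)
    (hr : ContDiffOn ℝ ℓ r (Set.Ioo a b))
    (hθ : ContDiffOn ℝ ℓ θ (Set.Ioo a b))
    (hpolar : ∀ s ∈ Set.Ioo a b, γ s = M + r s • (Real.cos (θ s), Real.sin (θ s)))
    (hrpos : ∀ s ∈ Set.Ioo a b, 0 < r s)
    (harc : ∀ s ∈ Set.Ioo a b, (deriv r s) ^ 2 + (r s * deriv θ s) ^ 2 = 1)
    (hθ'0 : 0 < deriv θ 0)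
    (hr0 : r 0 = R) (hr'0 : deriv r 0 = 0)
    (hκdef : κ = fun s => r s * (deriv θ s) ^ 2 - iteratedDeriv 2 r s)
    (hκ0 : κ 0 = 1 / R)
    (hκvanish : ∀ k : ℕ, 1 ≤ k → k ≤ ℓ - 3 → iteratedDeriv k κ 0 = 0)
    (hκℓ : iteratedDeriv (ℓ - 2) κ 0 ≠ 0) :
    (fun s : ℝ => R - r s - iteratedDeriv (ℓ - 2) κ 0 / (Nat.factorial ℓ) * s ^ ℓ)
      =o[nhds 0] (fun s : ℝ => s ^ ℓ) ∧
    ∃ C > (0:ℝ), ∃ L₀ > (0:ℝ), ∀ L : ℝ, 0 < L → L ≤ L₀ →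
      ∀ s : ℝ, |s| ≤ L → |R - pnorm (γ s - M)| ≤ C * L ^ ℓ := by
  obtain ⟨j, rfl⟩ : ∃ j, ℓ = j + 3 := ⟨ℓ - 3, by omega⟩
  simp only [show j + 3 - 2 = j + 1 by omega, show j + 3 - 3 = j by omega] at hκvanish hκℓ ⊢
  set U : Set ℝ := Set.Ioo a b with hUdef
  have hU : IsOpen U := isOpen_Ioo
  have h0U : (0:ℝ) ∈ U := ⟨ha, hb⟩
  have hUn : U ∈ nhds (0:ℝ) := hU.mem_nhds h0U
  -- smoothness
  have hrd : ContDiffOn ℝ (j+2) (deriv r) U := hr.deriv_of_isOpen hU (by exact_mod_cast (show j+2+1 ≤ j+3 by omega))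
  have hθd : ContDiffOn ℝ (j+2) (deriv θ) U := hθ.deriv_of_isOpen hU (by exact_mod_cast (show j+2+1 ≤ j+3 by omega))
  have hrdd : ContDiffOn ℝ (j+1) (deriv (deriv r)) U :=
    hrd.deriv_of_isOpen hU (by exact_mod_cast (show j+1+1 ≤ j+2 by omega))
  have h2r : iteratedDeriv 2 r = deriv (deriv r) := by
    rw [show (2:ℕ) = 1 + 1 from rfl, iteratedDeriv_succ, iteratedDeriv_one]
  have hκC : ContDiffOn ℝ (j+1) κ U := by
    rw [hκdef]
    exact ((hr.of_le (by exact_mod_cast (show j+1 ≤ j+3 by omega))).mul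
      ((hθd.of_le (by exact_mod_cast (show j+1 ≤ j+2 by omega))).pow 2)).sub (h2r ▸ hrdd)
  -- the constant c'
  set c' : ℝ := iteratedDeriv (j+1) κ 0 / (Nat.factorial (j+1)) with hc'def
  -- κ asymptotics
  have hgsmall : (fun s => κ s - 1/R - c' * s ^ (j+1)) =o[nhds 0] fun s : ℝ => s ^ (j+1) := by
    have hq1 : ContDiffOn ℝ (j+1) (fun s : ℝ => (-(1/R)) * s ^ 0) U :=
      (contDiff_const.mul (contDiff_id.pow 0)).contDiffOn
    have hq2 : ContDiffOn ℝ (j+1) (fun s : ℝ => (-c') * s ^ (j+1)) U :=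
      (contDiff_const.mul (contDiff_id.pow (j+1))).contDiffOn
    have hfeq : (fun s => κ s - 1/R - c' * s ^ (j+1))
        = fun s => κ s + ((-(1/R)) * s ^ 0 + (-c') * s ^ (j+1)) := by
      funext s; ring
    rw [hfeq]
    refine littleo_of_deriv_vanish (j+1) _ U hU h0U
      (hκC.add (hq1.add hq2)) ?_
    intro k hk
    have hsplit : iteratedDeriv k (fun s => κ s + ((-(1/R)) * s ^ 0 + (-c') * s ^ (j+1))) 0
        = iteratedDeriv k κ 0 + (iteratedDeriv k (fun s : ℝ => (-(1/R)) * s ^ 0) 0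
          + iteratedDeriv k (fun s : ℝ => (-c') * s ^ (j+1)) 0) := by
      rw [iteratedDeriv_add_of_open hU h0U (hκC.of_le (by exact_mod_cast hk))
        ((hq1.add hq2).of_le (by exact_mod_cast hk)),
        iteratedDeriv_add_of_open hU h0U (hq1.of_le (by exact_mod_cast hk)) (hq2.of_le (by exact_mod_cast hk))]
    have hm1 : iteratedDeriv k (fun s : ℝ => (-(1/R)) * s ^ 0) 0
        = (-(1/R)) * ((Nat.descFactorial 0 k : ℝ) * (0:ℝ) ^ (0 - k)) := by
      rw [iteratedDeriv_cmul_pow]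
    have hm2 : iteratedDeriv k (fun s : ℝ => (-c') * s ^ (j+1)) 0
        = (-c') * ((Nat.descFactorial (j+1) k : ℝ) * (0:ℝ) ^ (j + 1 - k)) := by
      rw [iteratedDeriv_cmul_pow]
    rw [hsplit, hm1, hm2]
    rcases Nat.eq_zero_or_pos k with rfl | hk1
    · simp [iteratedDeriv_zero, hκ0, zero_pow (by omega : j + 1 ≠ 0)]
    rcases eq_or_lt_of_le hk with rfl | hklt
    · rw [Nat.descFactorial_self, Nat.sub_self, pow_zero,
        show (0:ℕ) - (j+1) = 0 from by omega, Nat.descFactorial_eq_zero_iff_lt.2 (by omega)]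
      rw [hc'def]
      have hfac : (Nat.factorial (j+1) : ℝ) ≠ 0 := by positivity
      field_simp
      push_cast
      ring
    · have hz1 : (Nat.descFactorial 0 k : ℝ) = 0 := by
        rw [Nat.descFactorial_eq_zero_iff_lt.2 (by omega)]; simp
      have hz2 : (0:ℝ) ^ (j + 1 - k) = 0 := zero_pow (by omega)
      rw [hz1, hz2, hκvanish k (by omega) (by omega)]
      ring
  -- basic limits
  have hrcont : ContinuousAt r 0 := hr.continuousOn.continuousAt hUn
  have hκcont : ContinuousAt κ 0 := hκC.continuousOn.continuousAt hUn
  have hrto : Filter.Tendsto r (nhds 0) (nhds R) := hr0 ▸ hrcont.tendsto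
  have huto : Filter.Tendsto (fun s => r s - R) (nhds 0) (nhds 0) := by
    simpa using hrto.sub_const R
  have hgto : Filter.Tendsto (fun s => κ s - 1/R) (nhds 0) (nhds 0) := by
    have := hκcont.tendsto.sub_const (1/R)
    rwa [hκ0, sub_self] at this
  have hgO1 : (fun s => κ s - 1/R) =O[nhds 0] (fun _ : ℝ => (1:ℝ)) := hgto.isBigO_one ℝ
  have hgO : (fun s => κ s - 1/R) =O[nhds 0] fun s : ℝ => s ^ (j+1) := by
    have h1 : (fun s : ℝ => c' * s ^ (j+1)) =O[nhds 0] fun s : ℝ => s ^ (j+1) :=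
      (Asymptotics.isBigO_refl _ _).const_mul_left c'
    exact (hgsmall.isBigO.add h1).congr_left fun s => by ring
  -- differentiability
  have hdiff_r : ∀ s ∈ U, DifferentiableAt ℝ r s := fun s hs =>
    (hr.differentiableOn (by simp)).differentiableAt (hU.mem_nhds hs)
  have hdiff_rd : ∀ s ∈ U, DifferentiableAt ℝ (deriv r) s := fun s hs =>
    (hrd.differentiableOn (by simp)).differentiableAt (hU.mem_nhds hs)
  set p : ℝ → ℝ := fun s => r s * deriv r s with hpdef
  have hdiff_p : ∀ s ∈ U, DifferentiableAt ℝ p s := fun s hs =>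
    (hdiff_r s hs).mul (hdiff_rd s hs)
  have hp0 : p 0 = 0 := by rw [hpdef]; simp [hr'0]
  -- the ODE
  have hode : ∀ s ∈ U, deriv p s = 1 - r s * κ s := by
    intro s hs
    rw [hpdef, deriv_fun_mul (hdiff_r s hs) (hdiff_rd s hs), hκdef]
    simp only
    rw [h2r]
    linear_combination harc s hs
  have hode' : deriv p =ᶠ[nhds (0:ℝ)]
      fun s => -((1/R) * (r s - R) + R * (κ s - 1/R) + (r s - R) * (κ s - 1/R)) := by
    filter_upwards [hUn] with s hs
    rw [hode s hs]
    field_simp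
    ring
  -- derivative of r² - R²
  have hdv : ∀ s ∈ U, deriv (fun t => r t * r t - R * R) s = 2 * p s := by
    intro s hs
    rw [deriv_fun_sub (show DifferentiableAt ℝ (fun t => r t * r t) s from (hdiff_r s hs).mul (hdiff_r s hs)) (differentiableAt_const _),
      deriv_const, deriv_fun_mul (hdiff_r s hs) (hdiff_r s hs), hpdef]
    ring
  -- the inverse factor
  have hinvO : (fun s : ℝ => (r s + R)⁻¹) =O[nhds 0] (fun _ : ℝ => (1:ℝ)) := by
    have h2R : R + R ≠ 0 := by positivity
    exact ((hrto.add_const R).inv₀ h2R).isBigO_one ℝ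
  have hueq : (fun s => r s - R) =ᶠ[nhds (0:ℝ)]
      fun s => (r s * r s - R * R) * (r s + R)⁻¹ := by
    filter_upwards [hUn] with s hs
    have h1 : r s + R ≠ 0 := by have := hrpos s hs; positivity
    field_simp
    ring
  -- bootstrap
  have key : ∀ m : ℕ, m ≤ j + 1 → (fun s => r s - R) =o[nhds 0] fun s : ℝ => s ^ m := by
    intro m
    induction m using Nat.strong_induction_on with
    | _ m ih =>
      intro hm
      rcases Nat.eq_zero_or_pos m with rfl | hm0
      · simp only [pow_zero]
        exact (Asymptotics.isLittleO_one_iff ℝ).2 huto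
      · have hprev : (fun s => r s - R) =o[nhds 0] fun s : ℝ => s ^ (m - 2) :=
          ih (m - 2) (by omega) (by omega)
        have ht1 : (fun s : ℝ => (1/R) * (r s - R)) =o[nhds 0] fun s : ℝ => s ^ (m - 2) :=
          hprev.const_mul_left _
        have ht2 : (fun s : ℝ => R * (κ s - 1/R)) =o[nhds 0] fun s : ℝ => s ^ (m - 2) :=
          (hgO.trans_isLittleO (pow_isLittleO_pow (by omega))).const_mul_left R
        have ht3 : (fun s : ℝ => (r s - R) * (κ s - 1/R)) =o[nhds 0] fun s : ℝ => s ^ (m - 2) :=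
          (hprev.mul_isBigO hgO1).congr_right fun s => mul_one _
        have hdp : deriv p =o[nhds 0] fun s : ℝ => s ^ (m - 2) :=
          hode'.trans_isLittleO (((ht1.add ht2).add ht3).neg_left)
        have hplo : p =o[nhds 0] fun s : ℝ => s ^ (m - 2 + 1) :=
          littleo_integrate (by filter_upwards [hUn] with s hs; exact hdiff_p s hs) hp0 hdp
        have hdvlo : deriv (fun t => r t * r t - R * R)
            =o[nhds 0] fun s : ℝ => s ^ (m - 2 + 1) := by
          have heq : deriv (fun t => r t * r t - R * R) =ᶠ[nhds (0:ℝ)] fun s => 2 * p s := by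
            filter_upwards [hUn] with s hs; exact hdv s hs
          exact heq.trans_isLittleO (hplo.const_mul_left 2)
        have hvlo : (fun s => r s * r s - R * R) =o[nhds 0] fun s : ℝ => s ^ (m - 2 + 1 + 1) :=
          littleo_integrate (by
              filter_upwards [hUn] with s hs
              exact ((hdiff_r s hs).mul (hdiff_r s hs)).sub (differentiableAt_const _))
            (by simp [hr0]) hdvlo
        have hulo : (fun s => r s - R) =o[nhds 0] fun s : ℝ => s ^ (m - 2 + 1 + 1) :=
          hueq.trans_isLittleO ((hvlo.mul_isBigO hinvO).congr_right fun s => mul_one _)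
        exact hulo.trans_isBigO (pow_isBigO_pow (by omega))
  have hu : (fun s => r s - R) =o[nhds 0] fun s : ℝ => s ^ (j+1) := key (j+1) le_rfl
  -- refined step
  set A : ℝ := R * c' / (j + 2 : ℝ) with hAdef
  set φ₁ : ℝ → ℝ := fun s => p s + A * s ^ (j+2) with hφ₁def
  have hj2 : ((j:ℝ) + 2) ≠ 0 := by positivity
  have hdφ₁ : ∀ s ∈ U, deriv φ₁ s = deriv p s + R * c' * s ^ (j+1) := by
    intro s hs
    rw [hφ₁def]
    rw [deriv_fun_add (hdiff_p s hs) ((differentiableAt_pow _).const_mul _),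
      deriv_const_mul _ (differentiableAt_pow _), deriv_pow_field,
      show j + 2 - 1 = j + 1 from by omega, hAdef]
    have : R * c' / ((j:ℝ) + 2) * (((j:ℕ) + 2 : ℕ) * s ^ (j+1)) = R * c' * s ^ (j+1) := by
      push_cast
      field_simp
    rw [show ((j + 2 : ℕ) : ℝ) = (j:ℝ) + 2 from by push_cast; ring] at *
    field_simp
  have hdφ₁lo : deriv φ₁ =o[nhds 0] fun s : ℝ => s ^ (j+1) := by
    have heq : deriv φ₁ =ᶠ[nhds (0:ℝ)] fun s =>
        -((1/R) * (r s - R) + R * (κ s - 1/R - c' * s ^ (j+1)) + (r s - R) * (κ s - 1/R)) := by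
      filter_upwards [hUn, hode'] with s hs hodes
      rw [hdφ₁ s hs, hodes]; ring
    refine heq.trans_isLittleO ?_
    have t1 : (fun s : ℝ => (1/R) * (r s - R)) =o[nhds 0] fun s : ℝ => s ^ (j+1) :=
      hu.const_mul_left _
    have t2 : (fun s : ℝ => R * (κ s - 1/R - c' * s ^ (j+1)))
        =o[nhds 0] fun s : ℝ => s ^ (j+1) := hgsmall.const_mul_left R
    have t3 : (fun s : ℝ => (r s - R) * (κ s - 1/R)) =o[nhds 0] fun s : ℝ => s ^ (j+1) :=
      (hu.mul_isBigO hgO1).congr_right fun s => mul_one _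
    exact ((t1.add t2).add t3).neg_left
  have hφ₁0 : φ₁ 0 = 0 := by
    rw [hφ₁def]; simp [hp0, zero_pow (by omega : j + 2 ≠ 0)]
  have hφ₁lo : φ₁ =o[nhds 0] fun s : ℝ => s ^ (j+2) := by
    have := littleo_integrate (f := φ₁) (n := j+1)
      (by filter_upwards [hUn] with s hs
          exact (hdiff_p s hs).add ((differentiableAt_pow _).const_mul _))
      hφ₁0 hdφ₁lo
    exact this
  -- second integration
  set K : ℝ := 2 * R * c' / (((j:ℝ) + 2) * ((j:ℝ) + 3)) with hKdef
  have hj3 : ((j:ℝ) + 3) ≠ 0 := by positivity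
  set φ₂ : ℝ → ℝ := fun s => (r s * r s - R * R) + K * s ^ (j+3) with hφ₂def
  have hdφ₂ : ∀ s ∈ U, deriv φ₂ s = 2 * φ₁ s := by
    intro s hs
    rw [hφ₂def]
    rw [deriv_fun_add (show DifferentiableAt ℝ (fun t => r t * r t - R * R) s from ((hdiff_r s hs).mul (hdiff_r s hs)).sub (differentiableAt_const _))
      ((differentiableAt_pow _).const_mul _),
      deriv_const_mul _ (differentiableAt_pow _), deriv_pow_field,
      show j + 3 - 1 = j + 2 from by omega, hdv s hs, hφ₁def, hKdef, hAdef]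
    rw [show ((j + 3 : ℕ) : ℝ) = (j:ℝ) + 3 from by push_cast; ring]
    field_simp
  have hφ₂0 : φ₂ 0 = 0 := by
    rw [hφ₂def]; simp [hr0, zero_pow (by omega : j + 3 ≠ 0)]
  have hφ₂lo : φ₂ =o[nhds 0] fun s : ℝ => s ^ (j+3) := by
    have hder : deriv φ₂ =o[nhds 0] fun s : ℝ => s ^ (j+2) := by
      have heq : deriv φ₂ =ᶠ[nhds (0:ℝ)] fun s => 2 * φ₁ s := by
        filter_upwards [hUn] with s hs; exact hdφ₂ s hs
      exact heq.trans_isLittleO (hφ₁lo.const_mul_left 2)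
    exact littleo_integrate
      (by filter_upwards [hUn] with s hs
          exact (((hdiff_r s hs).mul (hdiff_r s hs)).sub (differentiableAt_const _)).add
            ((differentiableAt_pow _).const_mul _))
      hφ₂0 hder
  -- big-O facts
  have hvO : (fun s => r s * r s - R * R) =O[nhds 0] fun s : ℝ => s ^ (j+3) := by
    have h1 : (fun s : ℝ => K * s ^ (j+3)) =O[nhds 0] fun s : ℝ => s ^ (j+3) :=
      (Asymptotics.isBigO_refl _ _).const_mul_left K
    exact (hφ₂lo.isBigO.sub h1).congr_left fun s => by rw [hφ₂def]; ring
  have huO : (fun s => r s - R) =O[nhds 0] fun s : ℝ => s ^ (j+3) :=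
    hueq.trans_isBigO ((hvO.mul hinvO).congr_right fun s => mul_one _)
  have hu2 : (fun s => (r s - R) * (r s - R)) =o[nhds 0] fun s : ℝ => s ^ (j+3) := by
    have := huO.mul_isLittleO ((Asymptotics.isLittleO_one_iff ℝ).2 huto)
    exact this.congr_right fun s => mul_one _
  -- factorial identity
  have hfac : (Nat.factorial (j+3) : ℝ)
      = ((j:ℝ) + 3) * ((j:ℝ) + 2) * (Nat.factorial (j+1) : ℝ) := by
    rw [show j + 3 = (j + 2) + 1 from by omega, Nat.factorial_succ,
      show j + 2 = (j + 1) + 1 from by omega, Nat.factorial_succ]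
    push_cast
    ring
  have hfacne : (Nat.factorial (j+1) : ℝ) ≠ 0 := by positivity
  -- main asymptotic
  have main : (fun s : ℝ => R - r s - iteratedDeriv (j+1) κ 0 / (Nat.factorial (j+3)) * s ^ (j+3))
      =o[nhds 0] fun s : ℝ => s ^ (j+3) := by
    have hsum := (hφ₂lo.const_mul_left (-(1/(2*R)))).add (hu2.const_mul_left (1/(2*R)))
    refine hsum.congr_left fun s => ?_
    rw [hφ₂def]
    simp only
    rw [hfac, hKdef, hc'def]
    field_simp
    ring
  refine ⟨main, ?_⟩
  -- part 2
  obtain ⟨δ, hδ, hball⟩ := Metric.eventually_nhds_iff.1 (Asymptotics.isLittleO_iff.1 main one_pos)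
  set Cc : ℝ := |iteratedDeriv (j+1) κ 0 / (Nat.factorial (j+3) : ℝ)| + 1 with hCc
  have hCcpos : 0 < Cc := by positivity
  refine ⟨Cc, hCcpos, min δ (min (-a) b) / 2, by
    have h1 : (0:ℝ) < -a := by linarith
    have h2 := lt_min hδ (lt_min h1 hb)
    linarith, ?_⟩
  intro L hL hL0 s hsL
  have hsmall : |s| ≤ min δ (min (-a) b) / 2 := hsL.trans hL0
  have hsδ : |s| < δ := lt_of_le_of_lt hsmall (by
    have h1 : min δ (min (-a) b) ≤ δ := min_le_left _ _
    linarith)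
  have hsU : s ∈ U := by
    have h2 : min δ (min (-a) b) ≤ -a := (min_le_right _ _).trans (min_le_left _ _)
    have h3 : min δ (min (-a) b) ≤ b := (min_le_right _ _).trans (min_le_right _ _)
    have h4 : |s| < -a := by linarith
    have h5 : |s| < b := by linarith
    constructor
    · have := neg_abs_le s; linarith
    · have := le_abs_self s; linarith
  have hγ : pnorm (γ s - M) = r s := by
    rw [hpolar s hsU, add_sub_cancel_left]
    have hsq : (r s * Real.cos (θ s)) ^ 2 + (r s * Real.sin (θ s)) ^ 2 = (r s) ^ 2 := by
      linear_combination (r s) ^ 2 * (Real.sin_sq_add_cos_sq (θ s))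
    show Real.sqrt _ = r s
    have : (r s • (Real.cos (θ s), Real.sin (θ s)) : ℝ × ℝ)
        = (r s * Real.cos (θ s), r s * Real.sin (θ s)) := rfl
    rw [this]
    simp only
    rw [hsq, Real.sqrt_sq (hrpos s hsU).le]
  rw [hγ]
  have h1 := hball (show dist s 0 < δ by rw [Real.dist_eq, sub_zero]; exact hsδ)
  rw [one_mul, Real.norm_eq_abs, Real.norm_eq_abs] at h1
  have habs : |R - r s| ≤ Cc * |s| ^ (j+3) := by
    have h2 : |R - r s| ≤ |R - r s - iteratedDeriv (j+1) κ 0 / (Nat.factorial (j+3)) * s ^ (j+3)|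
        + |iteratedDeriv (j+1) κ 0 / (Nat.factorial (j+3)) * s ^ (j+3)| := by
      have := abs_sub_abs_le_abs_sub (R - r s)
        (iteratedDeriv (j+1) κ 0 / (Nat.factorial (j+3)) * s ^ (j+3))
      calc |R - r s|
          = |(R - r s - iteratedDeriv (j+1) κ 0 / (Nat.factorial (j+3)) * s ^ (j+3))
            + iteratedDeriv (j+1) κ 0 / (Nat.factorial (j+3)) * s ^ (j+3)| := by ring_nf
        _ ≤ _ := abs_add_le _ _
    have h3 : |iteratedDeriv (j+1) κ 0 / (Nat.factorial (j+3)) * s ^ (j+3)|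
        = |iteratedDeriv (j+1) κ 0 / (Nat.factorial (j+3) : ℝ)| * |s| ^ (j+3) := by
      rw [abs_mul, abs_pow]
    have h4 : |s ^ (j+3)| = |s| ^ (j+3) := abs_pow s _
    rw [hCc]
    calc |R - r s| ≤ |R - r s - iteratedDeriv (j+1) κ 0 / (Nat.factorial (j+3)) * s ^ (j+3)|
          + |iteratedDeriv (j+1) κ 0 / (Nat.factorial (j+3)) * s ^ (j+3)| := h2
      _ ≤ |s| ^ (j+3) + |iteratedDeriv (j+1) κ 0 / (Nat.factorial (j+3) : ℝ)| * |s| ^ (j+3) := by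
          rw [h3]; gcongr; rw [← h4]; exact h1
      _ = (|iteratedDeriv (j+1) κ 0 / (Nat.factorial (j+3) : ℝ)| + 1) * |s| ^ (j+3) := by ring
  calc |R - r s| ≤ Cc * |s| ^ (j+3) := habs
    _ ≤ Cc * L ^ (j+3) := by
        have : |s| ^ (j+3) ≤ L ^ (j+3) := pow_le_pow_left₀ (abs_nonneg s) hsL _
        exact mul_le_mul_of_nonneg_left this hCcpos.le
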